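/- arXiv:1911.01906 — 2 statements merged into one kernel-verified Lean document; each statement's English description precedes it below -/
import Mathlib

section
/- Let r1, r2, a1, a2, b1, b2 be positive real numbers with a1·a2 - b1·b2 > 0 and b1/a2 < r1/r2 < a1/b2, let u*, v* be the (positive) coexistence state, let d > 0, d12 ≥ 0, and set α = (2·b2·u* - r2)·v*. If α ≤ 0, then for every λ ≥ 0, det(J* - λ·J_Δ*) > 0; i.e., the homogeneous coexistence state cannot be destabilized by the cross-diffusion mechanism when α ≤ 0. -/
/-- If `α = (2 b2 u* - r2) v* ≤ 0`, the determinant of the characteristic matrix is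
positive for all `λ ≥ 0`: the homogeneous coexistence state cannot be destabilized
by the cross-diffusion mechanism. -/
theorem skt_no_turing_for_nonpositive_alpha
    (r1 r2 a1 a2 b1 b2 : ℝ)
    (hr1 : 0 < r1) (hr2 : 0 < r2) (ha1 : 0 < a1) (ha2 : 0 < a2)
    (hb1 : 0 < b1) (hb2 : 0 < b2)
    (hweak : a1 * a2 - b1 * b2 > 0)
    (hlow : b1 / a2 < r1 / r2) (hhigh : r1 / r2 < a1 / b2)
    (ustar vstar : ℝ)
    (hu : ustar = (r1 * a2 - r2 * b1) / (a1 * a2 - b1 * b2))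
    (hv : vstar = (r2 * a1 - r1 * b2) / (a1 * a2 - b1 * b2))
    (d d12 : ℝ) (hd : 0 < d) (hd12 : 0 ≤ d12)
    (α : ℝ) (hα : α = (2 * b2 * ustar - r2) * vstar) (hαle : α ≤ 0)
    (J JΔ : Matrix (Fin 2) (Fin 2) ℝ)
    (hJ : J = !![-(a1 * ustar), -(b1 * ustar); -(b2 * vstar), -(a2 * vstar)])
    (hJΔ : JΔ = !![d + d12 * vstar, d12 * ustar; 0, d]) :
    ∀ lam : ℝ, 0 ≤ lam → 0 < Matrix.det (J - lam • JΔ) := by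
  intro lam hlam
  have hD : 0 < a1 * a2 - b1 * b2 := hweak
  have hru : 0 < r1 * a2 - r2 * b1 := by
    have := (div_lt_div_iff₀ ha2 hr2).mp hlow; nlinarith
  have hrv : 0 < r2 * a1 - r1 * b2 := by
    have := (div_lt_div_iff₀ hr2 hb2).mp hhigh; nlinarith
  have hu0 : 0 < ustar := hu ▸ div_pos hru hD
  have hv0 : 0 < vstar := hv ▸ div_pos hrv hD
  have hsum : b2 * ustar + a2 * vstar = r2 := by
    rw [hu, hv]; rw [mul_div_assoc', mul_div_assoc', ← add_div, div_eq_iff hD.ne']; ring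
  have hkey : b2 * ustar ≤ a2 * vstar := by nlinarith [hαle, hα, hsum, hv0]
  subst hJ hJΔ
  simp only [Matrix.smul_of, Matrix.smul_cons, Matrix.smul_empty, smul_eq_mul,
    Matrix.det_fin_two_of, Matrix.sub_apply, Matrix.smul_apply,
    Matrix.of_apply, Matrix.cons_val', Matrix.cons_val_zero, Matrix.cons_val_one,
    Matrix.head_cons, Matrix.head_fin_const, Matrix.empty_val',
    Matrix.cons_val_fin_one, Matrix.det_fin_two]
  nlinarith [mul_pos hu0 hv0, mul_nonneg hlam hlam, mul_pos hd (mul_pos hu0 hv0),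
    mul_nonneg (mul_nonneg hlam hlam) (mul_nonneg hd.le (add_pos_of_pos_of_nonneg hd (mul_nonneg hd12 hv0.le)).le),
    mul_nonneg hlam (mul_nonneg hd.le (add_pos (mul_pos ha1 hu0) (mul_pos ha2 hv0)).le),
    mul_nonneg hlam (mul_nonneg (mul_nonneg hd12 hv0.le) (sub_nonneg.mpr hkey)),
    mul_pos (mul_pos hu0 hv0) hD]
end

section
/- Let r1, r2, a1, a2, b1, b2 be positive real numbers with a1·a2 - b1·b2 > 0 and b1/a2 < r1/r2 < a1/b2, let u*, v* be the (positive) coexistence state, set α = (2·b2·u* - r2)·v*, and suppose α > 0 and d12 > 0. Then there exists d0 > 0 such that for every d with 0 < d < d0 there exists λ > 0 with det(J* - λ·J_Δ*) < 0; i.e., for sufficiently small common diffusion the cross-diffusion term destabilizes the homogeneous coexistence state (Turing instability). -/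
set_option maxHeartbeats 1000000


/-- Turing instability by cross-diffusion: if `α > 0` and `d12 > 0`, then for all
sufficiently small common diffusion `d > 0` there is a Laplacian eigenvalue `λ > 0`
at which the determinant of the characteristic matrix is negative. -/
theorem skt_turing_instability_small_diffusion
    (r1 r2 a1 a2 b1 b2 : ℝ)
    (hr1 : 0 < r1) (hr2 : 0 < r2) (ha1 : 0 < a1) (ha2 : 0 < a2)
    (hb1 : 0 < b1) (hb2 : 0 < b2)
    (hweak : a1 * a2 - b1 * b2 > 0)
    (hlow : b1 / a2 < r1 / r2) (hhigh : r1 / r2 < a1 / b2)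
    (ustar vstar : ℝ)
    (hu : ustar = (r1 * a2 - r2 * b1) / (a1 * a2 - b1 * b2))
    (hv : vstar = (r2 * a1 - r1 * b2) / (a1 * a2 - b1 * b2))
    (α : ℝ) (hα : α = (2 * b2 * ustar - r2) * vstar) (hαpos : 0 < α)
    (d12 : ℝ) (hd12 : 0 < d12)
    (J : Matrix (Fin 2) (Fin 2) ℝ)
    (hJ : J = !![-(a1 * ustar), -(b1 * ustar); -(b2 * vstar), -(a2 * vstar)])
    (JΔ : ℝ → Matrix (Fin 2) (Fin 2) ℝ)
    (hJΔ : ∀ d : ℝ, JΔ d = !![d + d12 * vstar, d12 * ustar; 0, d]) :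
    ∃ d0 : ℝ, 0 < d0 ∧ ∀ d : ℝ, 0 < d → d < d0 →
      ∃ lam : ℝ, 0 < lam ∧ Matrix.det (J - lam • JΔ d) < 0 := by
  have hDpos : 0 < a1 * a2 - b1 * b2 := hweak
  have hDne : a1 * a2 - b1 * b2 ≠ 0 := ne_of_gt hDpos
  -- positivity of coexistence state
  have hnum1 : 0 < r1 * a2 - r2 * b1 := by
    rw [div_lt_div_iff₀ ha2 hr2] at hlow; nlinarith
  have hnum2 : 0 < r2 * a1 - r1 * b2 := by
    rw [div_lt_div_iff₀ hr2 hb2] at hhigh; nlinarith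
  have hupos : 0 < ustar := by rw [hu]; positivity
  have hvpos : 0 < vstar := by rw [hv]; positivity
  -- r2 = b2 u* + a2 v*
  have hr2eq : r2 = b2 * ustar + a2 * vstar := by
    rw [hu, hv, mul_div_assoc', mul_div_assoc', ← add_div, eq_div_iff hDne]; ring
  have hα' : α = (b2 * ustar - a2 * vstar) * vstar := by
    rw [hα, hr2eq]; ring
  set s : ℝ := a1 * ustar + a2 * vstar with hs
  set C : ℝ := (a1 * a2 - b1 * b2) * ustar * vstar with hC
  have hCpos : 0 < C := by rw [hC]; positivity
  have hspos : 0 < s := by rw [hs]; positivity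
  set L : ℝ := 2 * C / (d12 * α) with hL
  have hLpos : 0 < L := by rw [hL]; positivity
  set K : ℝ := (1 + d12 * vstar) * L ^ 2 + s * L with hK
  have hKpos : 0 < K := by rw [hK]; positivity
  refine ⟨min 1 (C / K), lt_min one_pos (by positivity), ?_⟩
  intro d hd hdlt
  have hd1 : d < 1 := lt_of_lt_of_le hdlt (min_le_left _ _)
  have hdC : d * K < C := by
    have := lt_of_lt_of_le hdlt (min_le_right 1 (C / K))
    calc d * K < (C / K) * K := by exact mul_lt_mul_of_pos_right this hKpos
    _ = C := by field_simp
  refine ⟨L, hLpos, ?_⟩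
  have hdet : Matrix.det (J - L • JΔ d) =
      d * (d + d12 * vstar) * L ^ 2 + (d * s - d12 * α) * L + C := by
    rw [hJ, hJΔ, hα', hs, hC]
    simp [Matrix.det_fin_two, Matrix.sub_apply, Matrix.smul_apply, smul_eq_mul]
    ring
  rw [hdet]
  have hLα : d12 * α * L = 2 * C := by
    rw [hL]; field_simp
  have hbr : (d + d12 * vstar) * L ^ 2 + s * L ≤ K := by
    rw [hK]
    have : d + d12 * vstar ≤ 1 + d12 * vstar := by linarith
    nlinarith [sq_nonneg L]
  nlinarith [mul_le_mul_of_nonneg_left hbr hd.le]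
end
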